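/- arXiv:1707.07111 — 3 statements merged into one kernel-verified Lean document; each statement's English description precedes it below -/
import Mathlib

section
/- The function η₂(z) = (4/3) ln(1 + |z|²) · (1 − |z|²)/(1 + |z|²) + 8/(3(1 + |z|²)) satisfies Δη₂ + 8/(1+|z|²)² · η₂ = 16 Y₀(z)/(1+|z|²)² at every point of ℝ², where Y₀(z) = (1 − |z|²)/(1 + |z|²). -/
/-- The standard Laplacian on `ℝ²`. -/
noncomputable def lap (f : ℝ × ℝ → ℝ) (z : ℝ × ℝ) : ℝ :=
  deriv (deriv (fun x => f (x, z.2))) z.1 + deriv (deriv (fun y => f (z.1, y))) z.2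

/-- `Y₀(z) = (1 − |z|²)/(1 + |z|²)`. -/
noncomputable def Y0 (z : ℝ × ℝ) : ℝ :=
  (1 - (z.1 ^ 2 + z.2 ^ 2)) / (1 + (z.1 ^ 2 + z.2 ^ 2))

/-- `η₂(z) = (4/3) ln(1+|z|²) (1−|z|²)/(1+|z|²) + 8/(3(1+|z|²))`. -/
noncomputable def eta2 (z : ℝ × ℝ) : ℝ :=
  4 / 3 * Real.log (1 + (z.1 ^ 2 + z.2 ^ 2)) *
      ((1 - (z.1 ^ 2 + z.2 ^ 2)) / (1 + (z.1 ^ 2 + z.2 ^ 2)))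
    + 8 / (3 * (1 + (z.1 ^ 2 + z.2 ^ 2)))

/-- First derivative of the one-variable slice of `eta2`. -/
noncomputable def G1 (c x : ℝ) : ℝ :=
  4 / 3 * (-(1 / (1 + (x ^ 2 + c))) - 2 * Real.log (1 + (x ^ 2 + c)) / (1 + (x ^ 2 + c)) ^ 2) *
    (2 * x)

/-- Second derivative of the one-variable slice of `eta2`. -/
noncomputable def G2 (c x : ℝ) : ℝ :=
  4 * x ^ 2 * (4 / 3 * (1 / (1 + (x ^ 2 + c)) ^ 2 - 2 / (1 + (x ^ 2 + c)) ^ 3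
      + 4 * Real.log (1 + (x ^ 2 + c)) / (1 + (x ^ 2 + c)) ^ 3))
  + 2 * (4 / 3 * (-(1 / (1 + (x ^ 2 + c))) - 2 * Real.log (1 + (x ^ 2 + c)) / (1 + (x ^ 2 + c)) ^ 2))

lemma basic (c x : ℝ) (hc : 0 ≤ c) :
    HasDerivAt (fun t : ℝ => 1 + (t ^ 2 + c)) (2 * x) x ∧ (1 + (x ^ 2 + c)) ≠ 0 := by
  constructor
  · have hs : HasDerivAt (fun t : ℝ => t ^ 2 + c) (2 * x) x := by
      simpa using (hasDerivAt_pow 2 x).add_const c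
    exact hs.const_add 1
  · positivity

lemma slice_deriv (c : ℝ) (hc : 0 ≤ c) (x : ℝ) :
    HasDerivAt (fun t : ℝ => 4 / 3 * Real.log (1 + (t ^ 2 + c)) *
        ((1 - (t ^ 2 + c)) / (1 + (t ^ 2 + c))) + 8 / (3 * (1 + (t ^ 2 + c))))
      (G1 c x) x := by
  obtain ⟨hu, hne⟩ := basic c x hc
  have hs : HasDerivAt (fun t : ℝ => t ^ 2 + c) (2 * x) x := by
    simpa using (hasDerivAt_pow 2 x).add_const c
  have hlog := hu.log hne
  have hnum : HasDerivAt (fun t : ℝ => 1 - (t ^ 2 + c)) (-(2 * x)) x := hs.const_sub 1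
  have hdiv := hnum.div hu hne
  have hterm1 := (hlog.const_mul (4 / 3 : ℝ)).mul hdiv
  have h3u : HasDerivAt (fun t : ℝ => 3 * (1 + (t ^ 2 + c))) (3 * (2 * x)) x := hu.const_mul 3
  have h3ne : 3 * (1 + (x ^ 2 + c)) ≠ 0 := by positivity
  have hterm2 := (hasDerivAt_const x (8 : ℝ)).div h3u h3ne
  have h := hterm1.add hterm2
  refine h.congr_deriv ?_
  unfold G1
  simp only [Pi.div_apply, Pi.neg_apply, Pi.sub_apply]
  have hu0 : (0:ℝ) < 1 + (x ^ 2 + c) := by positivity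
  field_simp
  ring

lemma G1_deriv (c : ℝ) (hc : 0 ≤ c) (x : ℝ) : HasDerivAt (G1 c) (G2 c x) x := by
  obtain ⟨hu, hne⟩ := basic c x hc
  have hlog := hu.log hne
  have hinv := (hasDerivAt_const x (1 : ℝ)).div hu hne
  have hu2 : HasDerivAt (fun t : ℝ => (1 + (t ^ 2 + c)) ^ 2)
      (2 * (1 + (x ^ 2 + c)) ^ 1 * (2 * x)) x := hu.pow 2
  have hne2 : (1 + (x ^ 2 + c)) ^ 2 ≠ 0 := pow_ne_zero _ hne
  have hA2 := (hlog.const_mul (2 : ℝ)).div hu2 hne2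
  have hA := (hinv.neg.sub hA2).const_mul (4 / 3 : ℝ)
  have hid : HasDerivAt (fun t : ℝ => 2 * t) 2 x := by
    simpa using (hasDerivAt_id x).const_mul (2 : ℝ)
  have h := hA.mul hid
  have heq : G1 c = fun t : ℝ => 4 / 3 *
      (-(1 / (1 + (t ^ 2 + c))) - 2 * Real.log (1 + (t ^ 2 + c)) / (1 + (t ^ 2 + c)) ^ 2) *
      (2 * t) := rfl
  rw [heq]
  refine h.congr_deriv ?_
  unfold G2
  simp only [Pi.div_apply, Pi.neg_apply, Pi.sub_apply]
  have hu0 : (0:ℝ) < 1 + (x ^ 2 + c) := by positivity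
  field_simp
  ring

theorem eta2_equation :
    ∀ z : ℝ × ℝ,
      lap eta2 z + 8 / (1 + (z.1 ^ 2 + z.2 ^ 2)) ^ 2 * eta2 z
        = 16 * Y0 z / (1 + (z.1 ^ 2 + z.2 ^ 2)) ^ 2 := by
  rintro ⟨x, y⟩
  have hx : (0:ℝ) ≤ x ^ 2 := sq_nonneg x
  have hy : (0:ℝ) ≤ y ^ 2 := sq_nonneg y
  have e1 : (fun t => eta2 (t, y)) = fun t : ℝ => 4 / 3 * Real.log (1 + (t ^ 2 + y ^ 2)) *
      ((1 - (t ^ 2 + y ^ 2)) / (1 + (t ^ 2 + y ^ 2))) + 8 / (3 * (1 + (t ^ 2 + y ^ 2))) := rfl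
  have e2 : (fun t => eta2 (x, t)) = fun t : ℝ => 4 / 3 * Real.log (1 + (t ^ 2 + x ^ 2)) *
      ((1 - (t ^ 2 + x ^ 2)) / (1 + (t ^ 2 + x ^ 2))) + 8 / (3 * (1 + (t ^ 2 + x ^ 2))) := by
    funext t
    simp only [eta2]
    rw [add_comm (x ^ 2) (t ^ 2)]
  have d1 : deriv (fun t => eta2 (t, y)) = G1 (y ^ 2) := by
    rw [e1]; exact funext fun t => (slice_deriv (y ^ 2) hy t).deriv
  have d2 : deriv (fun t => eta2 (x, t)) = G1 (x ^ 2) := by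
    rw [e2]; exact funext fun t => (slice_deriv (x ^ 2) hx t).deriv
  have dd1 : deriv (deriv (fun t => eta2 (t, y))) x = G2 (y ^ 2) x := by
    rw [d1]; exact (G1_deriv (y ^ 2) hy x).deriv
  have dd2 : deriv (deriv (fun t => eta2 (x, t))) y = G2 (x ^ 2) y := by
    rw [d2]; exact (G1_deriv (x ^ 2) hx y).deriv
  show deriv (deriv (fun t => eta2 (t, y))) x + deriv (deriv (fun t => eta2 (x, t))) y + _ = _
  rw [dd1, dd2]
  unfold G2 eta2 Y0
  simp only
  rw [add_comm (y ^ 2) (x ^ 2)]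
  have hu0 : (0:ℝ) < 1 + (x ^ 2 + y ^ 2) := by positivity
  field_simp
  ring
end

section
/- Let Ω ⊆ ℝ² be open and let f, g : Ω → ℝ be twice continuously differentiable. Then at every point z ∈ Ω the following pointwise identity holds: (Δ(f − g)) (∇(f + g) · z) + (Δ(f + g)) (∇(f − g) · z) = div{ (∇(f − g)) (∇(f + g) · z) + (∇(f + g)) (∇(f − g) · z) − (∇(f − g) · ∇(f + g)) z }. -/
/-- Partial derivative in the first coordinate direction. -/
noncomputable def pd1 (f : ℝ × ℝ → ℝ) (z : ℝ × ℝ) : ℝ :=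
  deriv (fun x => f (x, z.2)) z.1

/-- Partial derivative in the second coordinate direction. -/
noncomputable def pd2 (f : ℝ × ℝ → ℝ) (z : ℝ × ℝ) : ℝ :=
  deriv (fun y => f (z.1, y)) z.2

/-- Gradient of a scalar function on `ℝ²`. -/
noncomputable def grad (f : ℝ × ℝ → ℝ) (z : ℝ × ℝ) : ℝ × ℝ :=
  (pd1 f z, pd2 f z)

/-- Divergence of a vector field on `ℝ²`. -/
noncomputable def divg (F : ℝ × ℝ → ℝ × ℝ) (z : ℝ × ℝ) : ℝ :=
  pd1 (fun w => (F w).1) z + pd2 (fun w => (F w).2) z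

/-- Euclidean inner product on `ℝ²`. -/
def dot (p q : ℝ × ℝ) : ℝ := p.1 * q.1 + p.2 * q.2

open ContinuousLinearMap Filter

lemma hasDerivAt_line1 {h : ℝ × ℝ → ℝ} {z : ℝ × ℝ} (hd : DifferentiableAt ℝ h z) :
    HasDerivAt (fun x => h (x, z.2)) (fderiv ℝ h z (1, 0)) z.1 := by
  have hl : HasDerivAt (fun x : ℝ => (x, z.2)) ((1:ℝ), (0:ℝ)) z.1 :=
    (hasDerivAt_id' (x := z.1)).prodMk (hasDerivAt_const z.1 z.2)
  exact hd.hasFDerivAt.comp_hasDerivAt z.1 hl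

lemma hasDerivAt_line2 {h : ℝ × ℝ → ℝ} {z : ℝ × ℝ} (hd : DifferentiableAt ℝ h z) :
    HasDerivAt (fun y => h (z.1, y)) (fderiv ℝ h z (0, 1)) z.2 := by
  have hl : HasDerivAt (fun y : ℝ => (z.1, y)) ((0:ℝ), (1:ℝ)) z.2 :=
    (hasDerivAt_const z.2 z.1).prodMk ((hasDerivAt_id' (x := z.2)))
  exact hd.hasFDerivAt.comp_hasDerivAt z.2 hl

lemma pd1_eq {h : ℝ × ℝ → ℝ} {z : ℝ × ℝ} (hd : DifferentiableAt ℝ h z) :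
    pd1 h z = fderiv ℝ h z (1, 0) := (hasDerivAt_line1 hd).deriv

lemma pd2_eq {h : ℝ × ℝ → ℝ} {z : ℝ × ℝ} (hd : DifferentiableAt ℝ h z) :
    pd2 h z = fderiv ℝ h z (0, 1) := (hasDerivAt_line2 hd).deriv

lemma eventually_diff {h : ℝ × ℝ → ℝ} {z : ℝ × ℝ} (hh : ContDiffAt ℝ 2 h z) :
    ∀ᶠ w in nhds z, DifferentiableAt ℝ h w := by
  filter_upwards [hh.eventually (by norm_num)] with w hw
  exact hw.differentiableAt two_ne_zero

lemma hasFDerivAt_pd1 {h : ℝ × ℝ → ℝ} {z : ℝ × ℝ} (hh : ContDiffAt ℝ 2 h z) :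
    HasFDerivAt (pd1 h)
      ((ContinuousLinearMap.apply ℝ ℝ ((1:ℝ),(0:ℝ))).comp (fderiv ℝ (fderiv ℝ h) z)) z := by
  have hd : DifferentiableAt ℝ (fderiv ℝ h) z :=
    (hh.fderiv_right (m := 1) (by norm_num)).differentiableAt one_ne_zero
  have heq : pd1 h =ᶠ[nhds z] fun w => fderiv ℝ h w ((1:ℝ),(0:ℝ)) := by
    filter_upwards [eventually_diff hh] with w hw
    exact pd1_eq hw
  exact (((ContinuousLinearMap.apply ℝ ℝ ((1:ℝ),(0:ℝ))).hasFDerivAt).comp z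
    hd.hasFDerivAt).congr_of_eventuallyEq heq

lemma hasFDerivAt_pd2 {h : ℝ × ℝ → ℝ} {z : ℝ × ℝ} (hh : ContDiffAt ℝ 2 h z) :
    HasFDerivAt (pd2 h)
      ((ContinuousLinearMap.apply ℝ ℝ ((0:ℝ),(1:ℝ))).comp (fderiv ℝ (fderiv ℝ h) z)) z := by
  have hd : DifferentiableAt ℝ (fderiv ℝ h) z :=
    (hh.fderiv_right (m := 1) (by norm_num)).differentiableAt one_ne_zero
  have heq : pd2 h =ᶠ[nhds z] fun w => fderiv ℝ h w ((0:ℝ),(1:ℝ)) := by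
    filter_upwards [eventually_diff hh] with w hw
    exact pd2_eq hw
  exact (((ContinuousLinearMap.apply ℝ ℝ ((0:ℝ),(1:ℝ))).hasFDerivAt).comp z
    hd.hasFDerivAt).congr_of_eventuallyEq heq

lemma sym2nd {h : ℝ × ℝ → ℝ} {z : ℝ × ℝ} (hh : ContDiffAt ℝ 2 h z) (v w : ℝ × ℝ) :
    fderiv ℝ (fderiv ℝ h) z v w = fderiv ℝ (fderiv ℝ h) z w v := by
  have hd : DifferentiableAt ℝ (fderiv ℝ h) z :=
    (hh.fderiv_right (m := 1) (by norm_num)).differentiableAt one_ne_zero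
  apply second_derivative_symmetric_of_eventually (f := h)
  · filter_upwards [eventually_diff hh] with w hw
    exact hw.hasFDerivAt
  · exact hd.hasFDerivAt

lemma mixed_symm {h : ℝ × ℝ → ℝ} {z : ℝ × ℝ} (hh : ContDiffAt ℝ 2 h z) :
    fderiv ℝ (pd1 h) z ((0:ℝ),(1:ℝ)) = fderiv ℝ (pd2 h) z ((1:ℝ),(0:ℝ)) := by
  rw [(hasFDerivAt_pd1 hh).fderiv, (hasFDerivAt_pd2 hh).fderiv]
  simpa using sym2nd hh (0,1) (1,0)

theorem pohozaev_divergence_identity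
    (Ω : Set (ℝ × ℝ)) (hΩ : IsOpen Ω)
    (f g : ℝ × ℝ → ℝ)
    (hf : ContDiffOn ℝ 2 f Ω) (hg : ContDiffOn ℝ 2 g Ω) :
    ∀ z ∈ Ω,
      lap (fun w => f w - g w) z * dot (grad (fun w => f w + g w) z) z
        + lap (fun w => f w + g w) z * dot (grad (fun w => f w - g w) z) z
      = divg (fun w =>
          dot (grad (fun w' => f w' + g w') w) w • grad (fun w' => f w' - g w') w
          + dot (grad (fun w' => f w' - g w') w) w • grad (fun w' => f w' + g w') w
          - dot (grad (fun w' => f w' - g w') w) (grad (fun w' => f w' + g w') w) • w) z := by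
  intro z hz
  have hzn : Ω ∈ nhds z := hΩ.mem_nhds hz
  set u : ℝ × ℝ → ℝ := fun w => f w - g w with hudef
  set v : ℝ × ℝ → ℝ := fun w => f w + g w with hvdef
  have hu : ContDiffAt ℝ 2 u z := (hf.contDiffAt hzn).sub (hg.contDiffAt hzn)
  have hv : ContDiffAt ℝ 2 v z := (hf.contDiffAt hzn).add (hg.contDiffAt hzn)
  -- first-order partials, differentiable
  have hdu1 : DifferentiableAt ℝ (pd1 u) z := (hasFDerivAt_pd1 hu).differentiableAt
  have hdu2 : DifferentiableAt ℝ (pd2 u) z := (hasFDerivAt_pd2 hu).differentiableAt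
  have hdv1 : DifferentiableAt ℝ (pd1 v) z := (hasFDerivAt_pd1 hv).differentiableAt
  have hdv2 : DifferentiableAt ℝ (pd2 v) z := (hasFDerivAt_pd2 hv).differentiableAt
  -- directional derivative facts
  have hu1x := hasDerivAt_line1 hdu1
  have hu2x := hasDerivAt_line1 hdu2
  have hu1y := hasDerivAt_line2 hdu1
  have hu2y := hasDerivAt_line2 hdu2
  have hv1x := hasDerivAt_line1 hdv1
  have hv2x := hasDerivAt_line1 hdv2
  have hv1y := hasDerivAt_line2 hdv1
  have hv2y := hasDerivAt_line2 hdv2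
  have hsymu := mixed_symm hu
  have hsymv := mixed_symm hv
  -- Laplacians
  have hlapu : lap u z = fderiv ℝ (pd1 u) z (1, 0) + fderiv ℝ (pd2 u) z (0, 1) := by
    have e1 : deriv (fun x => u (x, z.2)) = fun x => pd1 u (x, z.2) := rfl
    have e2 : deriv (fun y => u (z.1, y)) = fun y => pd2 u (z.1, y) := rfl
    rw [lap, e1, e2, hu1x.deriv, hu2y.deriv]
  have hlapv : lap v z = fderiv ℝ (pd1 v) z (1, 0) + fderiv ℝ (pd2 v) z (0, 1) := by
    have e1 : deriv (fun x => v (x, z.2)) = fun x => pd1 v (x, z.2) := rfl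
    have e2 : deriv (fun y => v (z.1, y)) = fun y => pd2 v (z.1, y) := rfl
    rw [lap, e1, e2, hv1x.deriv, hv2y.deriv]
  -- x-derivative of first component of the vector field
  have H1 : HasDerivAt (fun x : ℝ =>
      (pd1 v (x, z.2) * x + pd2 v (x, z.2) * z.2) * pd1 u (x, z.2)
      + (pd1 u (x, z.2) * x + pd2 u (x, z.2) * z.2) * pd1 v (x, z.2)
      - (pd1 u (x, z.2) * pd1 v (x, z.2) + pd2 u (x, z.2) * pd2 v (x, z.2)) * x)
      ((fderiv ℝ (pd1 v) z (1, 0) * z.1 + pd1 v z + fderiv ℝ (pd2 v) z (1, 0) * z.2) * pd1 u z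
        + (pd1 v z * z.1 + pd2 v z * z.2) * fderiv ℝ (pd1 u) z (1, 0)
        + (fderiv ℝ (pd1 u) z (1, 0) * z.1 + pd1 u z + fderiv ℝ (pd2 u) z (1, 0) * z.2) * pd1 v z
        + (pd1 u z * z.1 + pd2 u z * z.2) * fderiv ℝ (pd1 v) z (1, 0)
        - ((fderiv ℝ (pd1 u) z (1, 0) * pd1 v z + pd1 u z * fderiv ℝ (pd1 v) z (1, 0)
            + fderiv ℝ (pd2 u) z (1, 0) * pd2 v z + pd2 u z * fderiv ℝ (pd2 v) z (1, 0)) * z.1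
          + (pd1 u z * pd1 v z + pd2 u z * pd2 v z))) z.1 := by
    have T := ((((hv1x.mul (hasDerivAt_id' (x := z.1))).add (hv2x.mul_const z.2)).mul hu1x).add
      (((hu1x.mul (hasDerivAt_id' (x := z.1))).add (hu2x.mul_const z.2)).mul hv1x)).sub
      (((hu1x.mul hv1x).add (hu2x.mul hv2x)).mul (hasDerivAt_id' (x := z.1)))
    exact T.congr_deriv (by simp only [Pi.add_apply, Pi.mul_apply, Pi.sub_apply, Prod.mk.eta]; ring)
  -- y-derivative of second component of the vector field
  have H2 : HasDerivAt (fun y : ℝ =>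
      (pd1 v (z.1, y) * z.1 + pd2 v (z.1, y) * y) * pd2 u (z.1, y)
      + (pd1 u (z.1, y) * z.1 + pd2 u (z.1, y) * y) * pd2 v (z.1, y)
      - (pd1 u (z.1, y) * pd1 v (z.1, y) + pd2 u (z.1, y) * pd2 v (z.1, y)) * y)
      ((fderiv ℝ (pd1 v) z (0, 1) * z.1 + fderiv ℝ (pd2 v) z (0, 1) * z.2 + pd2 v z) * pd2 u z
        + (pd1 v z * z.1 + pd2 v z * z.2) * fderiv ℝ (pd2 u) z (0, 1)
        + (fderiv ℝ (pd1 u) z (0, 1) * z.1 + fderiv ℝ (pd2 u) z (0, 1) * z.2 + pd2 u z) * pd2 v z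
        + (pd1 u z * z.1 + pd2 u z * z.2) * fderiv ℝ (pd2 v) z (0, 1)
        - ((fderiv ℝ (pd1 u) z (0, 1) * pd1 v z + pd1 u z * fderiv ℝ (pd1 v) z (0, 1)
            + fderiv ℝ (pd2 u) z (0, 1) * pd2 v z + pd2 u z * fderiv ℝ (pd2 v) z (0, 1)) * z.2
          + (pd1 u z * pd1 v z + pd2 u z * pd2 v z))) z.2 := by
    have T := ((((hv1y.mul_const z.1).add (hv2y.mul (hasDerivAt_id' (x := z.2)))).mul hu2y).add
      (((hu1y.mul_const z.1).add (hu2y.mul (hasDerivAt_id' (x := z.2)))).mul hv2y)).sub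
      (((hu1y.mul hv1y).add (hu2y.mul hv2y)).mul (hasDerivAt_id' (x := z.2)))
    exact T.congr_deriv (by simp only [Pi.add_apply, Pi.mul_apply, Pi.sub_apply, Prod.mk.eta]; ring)
  have h1 : pd1 (fun w =>
      (dot (grad v w) w • grad u w + dot (grad u w) w • grad v w
        - dot (grad u w) (grad v w) • w).1) z = _ := H1.deriv
  have h2 : pd2 (fun w =>
      (dot (grad v w) w • grad u w + dot (grad u w) w • grad v w
        - dot (grad u w) (grad v w) • w).2) z = _ := H2.deriv
  rw [hlapu, hlapv]
  simp only [divg]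
  rw [h1, h2, hsymu, hsymv]
  simp [dot, grad]
  ring
end

section
/- Let Ω ⊆ ℝ² be open, let ζ, v : Ω → ℝ be twice continuously differentiable, and fix l ∈ {1, 2} with e_l the l-th standard basis vector of ℝ². Then at every point of Ω: div( (∇ζ) ∂_l v + (∇v) ∂_l ζ − (∇ζ · ∇v) e_l ) = (Δζ) ∂_l v + (Δv) ∂_l ζ, where ∂_l denotes the partial derivative in the l-th coordinate direction. -/
/-- Partial derivative in the `l`-th coordinate direction. -/
noncomputable def pd (l : Fin 2) (f : ℝ × ℝ → ℝ) (z : ℝ × ℝ) : ℝ :=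
  if l = 0 then pd1 f z else pd2 f z

/-- The `l`-th standard basis vector of `ℝ²`. -/
def stdBasis (l : Fin 2) : ℝ × ℝ := if l = 0 then (1, 0) else (0, 1)

open Filter Topology

private lemma slice1 {g : ℝ × ℝ → ℝ} {L : ℝ × ℝ →L[ℝ] ℝ} {z : ℝ × ℝ}
    (h : HasFDerivAt g L z) : HasDerivAt (fun x => g (x, z.2)) (L (1, 0)) z.1 := by
  have h1 : HasDerivAt (fun x : ℝ => (x, z.2)) ((1 : ℝ), (0 : ℝ)) z.1 :=
    (hasDerivAt_id z.1).prodMk (hasDerivAt_const z.1 z.2)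
  exact h.comp_hasDerivAt z.1 h1

private lemma slice2 {g : ℝ × ℝ → ℝ} {L : ℝ × ℝ →L[ℝ] ℝ} {z : ℝ × ℝ}
    (h : HasFDerivAt g L z) : HasDerivAt (fun y => g (z.1, y)) (L (0, 1)) z.2 := by
  have h1 : HasDerivAt (fun y : ℝ => (z.1, y)) ((0 : ℝ), (1 : ℝ)) z.2 :=
    (hasDerivAt_const z.2 z.1).prodMk (hasDerivAt_id z.2)
  exact h.comp_hasDerivAt z.2 h1

private lemma fslice1 {f : ℝ × ℝ → ℝ} {z : ℝ × ℝ}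
    (h : HasFDerivAt (fderiv ℝ f) (fderiv ℝ (fderiv ℝ f) z) z) (u : ℝ × ℝ) :
    HasDerivAt (fun x => fderiv ℝ f (x, z.2) u) (fderiv ℝ (fderiv ℝ f) z (1, 0) u) z.1 := by
  have := slice1 (h.clm_apply (hasFDerivAt_const u z))
  simpa using this

private lemma fslice2 {f : ℝ × ℝ → ℝ} {z : ℝ × ℝ}
    (h : HasFDerivAt (fderiv ℝ f) (fderiv ℝ (fderiv ℝ f) z) z) (u : ℝ × ℝ) :
    HasDerivAt (fun y => fderiv ℝ f (z.1, y) u) (fderiv ℝ (fderiv ℝ f) z (0, 1) u) z.2 := by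
  have := slice2 (h.clm_apply (hasFDerivAt_const u z))
  simpa using this

private lemma divg_congr {F G : ℝ × ℝ → ℝ × ℝ} {z : ℝ × ℝ} (h : F =ᶠ[𝓝 z] G) :
    divg F z = divg G z := by
  have t1 : Filter.Tendsto (fun x : ℝ => (x, z.2)) (𝓝 z.1) (𝓝 z) := by
    have : Continuous (fun x : ℝ => (x, z.2)) := continuous_id.prodMk continuous_const
    simpa using this.tendsto z.1
  have t2 : Filter.Tendsto (fun y : ℝ => (z.1, y)) (𝓝 z.2) (𝓝 z) := by
    have : Continuous (fun y : ℝ => (z.1, y)) := continuous_const.prodMk continuous_id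
    simpa using this.tendsto z.2
  have h1 : (fun x : ℝ => (F (x, z.2)).1) =ᶠ[𝓝 z.1] fun x => (G (x, z.2)).1 :=
    (h.comp_tendsto t1).fun_comp Prod.fst
  have h2 : (fun y : ℝ => (F (z.1, y)).2) =ᶠ[𝓝 z.2] fun y => (G (z.1, y)).2 :=
    (h.comp_tendsto t2).fun_comp Prod.snd
  simp only [divg, pd1, pd2]
  rw [h1.deriv_eq, h2.deriv_eq]

theorem divergence_identity_mixed_derivatives
    (Ω : Set (ℝ × ℝ)) (hΩ : IsOpen Ω)
    (ζ v : ℝ × ℝ → ℝ)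
    (hζ : ContDiffOn ℝ 2 ζ Ω) (hv : ContDiffOn ℝ 2 v Ω)
    (l : Fin 2) :
    ∀ z ∈ Ω,
      divg (fun w =>
          pd l v w • grad ζ w + pd l ζ w • grad v w
            - dot (grad ζ w) (grad v w) • stdBasis l) z
      = lap ζ z * pd l v z + lap v z * pd l ζ z := by
  intro z hz
  have hζz : ContDiffAt ℝ 2 ζ z := hζ.contDiffAt (hΩ.mem_nhds hz)
  have hvz : ContDiffAt ℝ 2 v z := hv.contDiffAt (hΩ.mem_nhds hz)
  have hζ'' : HasFDerivAt (fderiv ℝ ζ) (fderiv ℝ (fderiv ℝ ζ) z) z :=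
    ((hζz.fderiv_right (m := 1) (by norm_num)).differentiableAt one_ne_zero).hasFDerivAt
  have hv'' : HasFDerivAt (fderiv ℝ v) (fderiv ℝ (fderiv ℝ v) z) z :=
    ((hvz.fderiv_right (m := 1) (by norm_num)).differentiableAt one_ne_zero).hasFDerivAt
  have hdiffζ : ∀ w ∈ Ω, DifferentiableAt ℝ ζ w := fun w hw =>
    (hζ.contDiffAt (hΩ.mem_nhds hw)).differentiableAt (by norm_num)
  have hdiffv : ∀ w ∈ Ω, DifferentiableAt ℝ v w := fun w hw =>
    (hv.contDiffAt (hΩ.mem_nhds hw)).differentiableAt (by norm_num)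
  have hpd1 : ∀ (f : ℝ × ℝ → ℝ) (w : ℝ × ℝ), DifferentiableAt ℝ f w →
      pd1 f w = fderiv ℝ f w (1, 0) := fun f w hf => (slice1 hf.hasFDerivAt).deriv
  have hpd2 : ∀ (f : ℝ × ℝ → ℝ) (w : ℝ × ℝ), DifferentiableAt ℝ f w →
      pd2 f w = fderiv ℝ f w (0, 1) := fun f w hf => (slice2 hf.hasFDerivAt).deriv
  have hpdl : ∀ (f : ℝ × ℝ → ℝ) (w : ℝ × ℝ), DifferentiableAt ℝ f w →
      pd l f w = fderiv ℝ f w (stdBasis l) := by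
    intro f w hf
    by_cases hl : l = 0
    · simp [pd, stdBasis, hl, hpd1 f w hf]
    · simp [pd, stdBasis, hl, hpd2 f w hf]
  -- replace the field by its fderiv description
  have hFG : (fun w =>
          pd l v w • grad ζ w + pd l ζ w • grad v w
            - dot (grad ζ w) (grad v w) • stdBasis l) =ᶠ[𝓝 z]
      (fun w =>
        (fderiv ℝ v w (stdBasis l) * fderiv ℝ ζ w (1, 0)
            + fderiv ℝ ζ w (stdBasis l) * fderiv ℝ v w (1, 0)
            - (fderiv ℝ ζ w (1, 0) * fderiv ℝ v w (1, 0)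
                + fderiv ℝ ζ w (0, 1) * fderiv ℝ v w (0, 1)) * (stdBasis l).1,
         fderiv ℝ v w (stdBasis l) * fderiv ℝ ζ w (0, 1)
            + fderiv ℝ ζ w (stdBasis l) * fderiv ℝ v w (0, 1)
            - (fderiv ℝ ζ w (1, 0) * fderiv ℝ v w (1, 0)
                + fderiv ℝ ζ w (0, 1) * fderiv ℝ v w (0, 1)) * (stdBasis l).2)) := by
    filter_upwards [hΩ.eventually_mem hz] with w hw
    have dζ := hdiffζ w hw
    have dv := hdiffv w hw
    simp only [grad, dot, hpdl _ _ dζ, hpdl _ _ dv, hpd1 _ _ dζ, hpd1 _ _ dv,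
      hpd2 _ _ dζ, hpd2 _ _ dv, Prod.ext_iff, Prod.fst_add, Prod.fst_sub, Prod.snd_add,
      Prod.snd_sub, Prod.smul_fst, Prod.smul_snd, smul_eq_mul]
    constructor <;> trivial
  rw [divg_congr hFG]
  -- derivative computations
  have h1 := (((fslice1 hv'' (stdBasis l)).mul (fslice1 hζ'' (1, 0))).add
      ((fslice1 hζ'' (stdBasis l)).mul (fslice1 hv'' (1, 0)))).sub
      ((((fslice1 hζ'' (1, 0)).mul (fslice1 hv'' (1, 0))).add
        ((fslice1 hζ'' (0, 1)).mul (fslice1 hv'' (0, 1)))).mul_const (stdBasis l).1)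
  have h2 := (((fslice2 hv'' (stdBasis l)).mul (fslice2 hζ'' (0, 1))).add
      ((fslice2 hζ'' (stdBasis l)).mul (fslice2 hv'' (0, 1)))).sub
      ((((fslice2 hζ'' (1, 0)).mul (fslice2 hv'' (1, 0))).add
        ((fslice2 hζ'' (0, 1)).mul (fslice2 hv'' (0, 1)))).mul_const (stdBasis l).2)
  have evΩ1 : ∀ᶠ x in 𝓝 z.1, (x, z.2) ∈ Ω := by
    have t1 : Filter.Tendsto (fun x : ℝ => (x, z.2)) (𝓝 z.1) (𝓝 z) := by
      have : Continuous (fun x : ℝ => (x, z.2)) := continuous_id.prodMk continuous_const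
      simpa using this.tendsto z.1
    exact t1.eventually (hΩ.eventually_mem hz)
  have evΩ2 : ∀ᶠ y in 𝓝 z.2, (z.1, y) ∈ Ω := by
    have t2 : Filter.Tendsto (fun y : ℝ => (z.1, y)) (𝓝 z.2) (𝓝 z) := by
      have : Continuous (fun y : ℝ => (z.1, y)) := continuous_const.prodMk continuous_id
      simpa using this.tendsto z.2
    exact t2.eventually (hΩ.eventually_mem hz)
  -- Laplacian in terms of the second fderiv
  have lap_eq : ∀ (f : ℝ × ℝ → ℝ), ContDiffAt ℝ 2 f z →
      HasFDerivAt (fderiv ℝ f) (fderiv ℝ (fderiv ℝ f) z) z →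
      (∀ w ∈ Ω, DifferentiableAt ℝ f w) →
      lap f z = fderiv ℝ (fderiv ℝ f) z (1, 0) (1, 0)
        + fderiv ℝ (fderiv ℝ f) z (0, 1) (0, 1) := by
    intro f _ hf'' hdf
    have m1 : deriv (fun x => f (x, z.2)) =ᶠ[𝓝 z.1] fun x => fderiv ℝ f (x, z.2) (1, 0) := by
      filter_upwards [evΩ1] with x hx
      exact (slice1 (hdf _ hx).hasFDerivAt).deriv
    have m2 : deriv (fun y => f (z.1, y)) =ᶠ[𝓝 z.2] fun y => fderiv ℝ f (z.1, y) (0, 1) := by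
      filter_upwards [evΩ2] with y hy
      exact (slice2 (hdf _ hy).hasFDerivAt).deriv
    simp only [lap]
    rw [m1.deriv_eq, m2.deriv_eq, (fslice1 hf'' (1, 0)).deriv, (fslice2 hf'' (0, 1)).deriv]
  rw [lap_eq ζ hζz hζ'' hdiffζ, lap_eq v hvz hv'' hdiffv,
    hpdl v z (hdiffv z hz), hpdl ζ z (hdiffζ z hz)]
  simp only [divg, pd1, pd2]
  simp only [Pi.mul_def, Pi.add_def, Pi.sub_def] at h1 h2
  rw [h1.deriv, h2.deriv]
  have sζ := (hζz.isSymmSndFDerivAt (by simp)) (0, 1) (1, 0)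
  have sv := (hvz.isSymmSndFDerivAt (by simp)) (0, 1) (1, 0)
  simp only [Prod.mk.eta]
  fin_cases l <;> simp only [stdBasis] <;> norm_num <;>
    rw [sζ, sv] <;> ring
end
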